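/- Let v, w ∈ ℝ³ satisfy ‖v‖ = ‖w‖ = 1 and ⟨v,w⟩ = 0, let B be a skew-symmetric real 3×3 matrix with B·v = 0 and B·w ≠ 0, and let A = [[B, w],[wᵀ, 0]] be the associated real 4×4 block matrix, assumed to satisfy A³ = 0. Let v̄ = (v₁, v₂, v₃, 0) and e₄ = (0,0,0,1). Then the map f : ℝ² → ℝ⁴ given by f(t,s) = exp(tA) · (sinh(s)·v̄ + cosh(s)·e₄) is injective. -/

import Mathlib

open Matrix RealInnerProductSpace

noncomputable section

/-- The Lorentz inner product `⟨x,y⟩_L = x₁y₁ + x₂y₂ + x₃y₃ − x₄y₄` on `ℝ⁴`. -/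
def lorentz (x y : Fin 4 → ℝ) : ℝ :=
  x 0 * y 0 + x 1 * y 1 + x 2 * y 2 - x 3 * y 3

/-- The Lorentz signature matrix `J = diag(1,1,1,−1)`. -/
def lorentzJ : Matrix (Fin 4) (Fin 4) ℝ :=
  Matrix.diagonal ![1, 1, 1, -1]

/-- The block matrix `A = [[B, w], [wᵀ, 0]]`: upper-left `3×3` block `B`, last column the
entries of `w` in the first three rows and `0` in the last, last row the entries of `w`
in the first three columns and `0` in the last. -/
def blockA (B : Matrix (Fin 3) (Fin 3) ℝ) (w : Fin 3 → ℝ) : Matrix (Fin 4) (Fin 4) ℝ :=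
  fun i j =>
    if hi : (i : ℕ) < 3 then
      if hj : (j : ℕ) < 3 then B ⟨i, hi⟩ ⟨j, hj⟩ else w ⟨i, hi⟩
    else
      if hj : (j : ℕ) < 3 then w ⟨j, hj⟩ else 0

/-- The inclusion of `ℝ³` into `ℝ⁴` as the vectors with vanishing fourth coordinate. -/
def extend3 (v : Fin 3 → ℝ) : Fin 4 → ℝ :=
  fun i => if h : (i : ℕ) < 3 then v ⟨i, h⟩ else 0

/-- The fourth canonical basis vector `e₄ = (0,0,0,1)` of `ℝ⁴`. -/
def e4 : Fin 4 → ℝ := fun i => if i = 3 then 1 else 0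

/-- How `blockA B w` acts on a vector written as `extend3 u + c • e4`. -/
lemma blockA_mulVec (B : Matrix (Fin 3) (Fin 3) ℝ) (w u : Fin 3 → ℝ) (c : ℝ) :
    (blockA B w).mulVec (extend3 u + c • e4)
      = extend3 (B.mulVec u + c • w) + (w ⬝ᵥ u) • e4 := by
  ext ⟨i, hi⟩
  interval_cases i <;>
    simp [blockA, extend3, e4, Matrix.mulVec, dotProduct, Fin.sum_univ_four,
      Fin.sum_univ_three, Fin.ext_iff, show ((0:Fin 4):ℕ) = 0 from rfl,
      show ((1:Fin 4):ℕ) = 1 from rfl, show ((2:Fin 4):ℕ) = 2 from rfl,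
      show ((3:Fin 4):ℕ) = 3 from rfl] <;> ring

lemma dEE (a b : Fin 3 → ℝ) : extend3 a ⬝ᵥ extend3 b = a ⬝ᵥ b := by
  simp [dotProduct, extend3, Fin.sum_univ_four, Fin.sum_univ_three,
    show ((0:Fin 4):ℕ) = 0 from rfl, show ((1:Fin 4):ℕ) = 1 from rfl,
    show ((2:Fin 4):ℕ) = 2 from rfl, show ((3:Fin 4):ℕ) = 3 from rfl]

lemma dE4 (a : Fin 3 → ℝ) : e4 ⬝ᵥ extend3 a = 0 := by
  simp [dotProduct, extend3, e4, Fin.sum_univ_four, Fin.ext_iff,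
    show ((0:Fin 4):ℕ) = 0 from rfl, show ((1:Fin 4):ℕ) = 1 from rfl,
    show ((2:Fin 4):ℕ) = 2 from rfl, show ((3:Fin 4):ℕ) = 3 from rfl]

lemma extend3_zero : extend3 0 = 0 := by
  ext i; simp [extend3]

/-- Truncated exponential for a matrix with `A ^ 3 = 0`. -/
lemma exp_nilpotent (A : Matrix (Fin 4) (Fin 4) ℝ) (hA : A ^ 3 = 0) (t : ℝ) :
    NormedSpace.exp (t • A) = 1 + t • A + (t ^ 2 / 2) • A ^ 2 := by
  rw [NormedSpace.exp_eq_tsum ℝ]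
  have h : ∀ n ∉ Finset.range 3, ((n.factorial : ℝ)⁻¹) • (t • A) ^ n = 0 := by
    intro n hn
    rw [Finset.mem_range, not_lt] at hn
    have hAn : A ^ n = 0 := by
      calc A ^ n = A ^ 3 * A ^ (n - 3) := by rw [← pow_add]; congr 1; omega
        _ = 0 := by rw [hA, zero_mul]
    rw [smul_pow, hAn, smul_zero, smul_zero]
  dsimp only
  rw [tsum_eq_sum h]
  have h3 : Finset.range 3 = {0, 1, 2} := by decide
  rw [h3]
  simp [Finset.sum_insert, Finset.mem_insert, smul_pow, Nat.factorial]
  module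

/-- Injectivity of `f(t,s) = exp(tA)·(sinh(s)·v̄ + cosh(s)·e₄)` for `A = [[B, w],[wᵀ, 0]]`
with `B` skew-symmetric, `B·v = 0`, `B·w ≠ 0` and `A³ = 0` (`v, w` orthonormal in `ℝ³`). -/
theorem f_injective
    (v w : EuclideanSpace ℝ (Fin 3)) (hv : ‖v‖ = 1) (hw : ‖w‖ = 1) (hvw : ⟪v, w⟫ = 0)
    (B : Matrix (Fin 3) (Fin 3) ℝ) (hB : Bᵀ = -B) (hBv : B.mulVec v = 0)
    (hBw : B.mulVec w ≠ 0) (hA : blockA B w ^ 3 = 0)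
    (f : ℝ × ℝ → (Fin 4 → ℝ))
    (hf : ∀ p : ℝ × ℝ, f p = (NormedSpace.exp (p.1 • blockA B w)).mulVec
      (Real.sinh p.2 • extend3 v + Real.cosh p.2 • e4)) :
    Function.Injective f := by
  set A := blockA B w with hAdef
  -- scalar facts
  have hvv : (v : Fin 3 → ℝ) ⬝ᵥ (v : Fin 3 → ℝ) = 1 := by
    have h := real_inner_self_eq_norm_sq v
    rw [hv] at h
    simp only [PiLp.inner_apply, RCLike.inner_apply, conj_trivial, one_pow] at h
    simpa [dotProduct] using h
  have hww : (w : Fin 3 → ℝ) ⬝ᵥ (w : Fin 3 → ℝ) = 1 := by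
    have h := real_inner_self_eq_norm_sq w
    rw [hw] at h
    simp only [PiLp.inner_apply, RCLike.inner_apply, conj_trivial, one_pow] at h
    simpa [dotProduct] using h
  have hvw' : (v : Fin 3 → ℝ) ⬝ᵥ (w : Fin 3 → ℝ) = 0 := by
    simpa [dotProduct, PiLp.inner_apply, RCLike.inner_apply, mul_comm] using hvw
  have hwv' : (w : Fin 3 → ℝ) ⬝ᵥ (v : Fin 3 → ℝ) = 0 := by
    rw [dotProduct_comm]; exact hvw'
  have hBwv : B.mulVec w ⬝ᵥ (v : Fin 3 → ℝ) = 0 := by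
    rw [dotProduct_comm, Matrix.dotProduct_mulVec, ← Matrix.mulVec_transpose, hB,
      Matrix.neg_mulVec, hBv, neg_zero, zero_dotProduct]
  have hBww : B.mulVec w ⬝ᵥ (w : Fin 3 → ℝ) = 0 := by
    have h1 : (w : Fin 3 → ℝ) ⬝ᵥ B.mulVec w = - (B.mulVec w ⬝ᵥ (w : Fin 3 → ℝ)) := by
      rw [Matrix.dotProduct_mulVec, ← Matrix.mulVec_transpose, hB, Matrix.neg_mulVec,
        neg_dotProduct]
    have h2 : (w : Fin 3 → ℝ) ⬝ᵥ B.mulVec w = B.mulVec w ⬝ᵥ (w : Fin 3 → ℝ) :=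
      dotProduct_comm _ _
    linarith [h1, h2]
  -- action of A on the relevant vectors
  have hAv : A.mulVec (extend3 v) = 0 := by
    have := blockA_mulVec B w v 0
    simpa [hBv, hwv', extend3_zero] using this
  have hAe4 : A.mulVec e4 = extend3 w := by
    have := blockA_mulVec B w 0 1
    simpa [extend3_zero] using this
  have hAw : A.mulVec (extend3 w) = extend3 (B.mulVec w) + e4 := by
    have := blockA_mulVec B w w 0
    simpa [hww] using this
  -- explicit formula for f
  have hfp : ∀ t s : ℝ, (NormedSpace.exp (t • A)).mulVec
      (Real.sinh s • extend3 v + Real.cosh s • e4)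
      = Real.sinh s • extend3 v + Real.cosh s • e4 + (t * Real.cosh s) • extend3 w
        + (t ^ 2 / 2 * Real.cosh s) • (extend3 (B.mulVec w) + e4) := by
    intro t s
    rw [exp_nilpotent A hA t, Matrix.add_mulVec, Matrix.add_mulVec, Matrix.one_mulVec,
      Matrix.smul_mulVec, Matrix.smul_mulVec, pow_two A, ← Matrix.mulVec_mulVec]
    simp only [Matrix.mulVec_add, Matrix.mulVec_smul, hAv, hAe4, Matrix.mulVec_zero,
      hAw, smul_zero]
    module
  intro p q hpq
  rw [hf p, hf q, hfp, hfp] at hpq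
  -- pair with extend3 v : recovers sinh
  have h1 : Real.sinh p.2 = Real.sinh q.2 := by
    have := congrArg (fun x => x ⬝ᵥ extend3 v) hpq
    simpa [add_dotProduct, smul_dotProduct, dEE, dE4, hvv, hwv', hBwv]
      using this
  have hs : p.2 = q.2 := Real.sinh_injective h1
  -- pair with extend3 w : recovers t * cosh
  have h2 : p.1 * Real.cosh p.2 = q.1 * Real.cosh q.2 := by
    have := congrArg (fun x => x ⬝ᵥ extend3 w) hpq
    simpa [add_dotProduct, smul_dotProduct, dEE, dE4, hvw', hww, hBww]
      using this
  have ht : p.1 = q.1 := by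
    rw [hs] at h2
    exact mul_right_cancel₀ (ne_of_gt (Real.cosh_pos (x := q.2))) h2
  exact Prod.ext ht hs
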